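/- arXiv:0711.3642 — 2 statements merged into one kernel-verified Lean document; each statement's English description precedes it below -/
import Mathlib

section
/- Let (q, α) and (q′, α′) be right comonad-morphisms from 𝔇 = (B, d, Δ_d, ε_d) to 𝔠 = (A, c, Δ_c, ε_c) in a 2-category. There is a bijective correspondence between: (i) 2-cells σ : d ∘ q ⟶ q′ satisfying α′ ∘ (d ◁ σ) ∘ (Δ_d ▷ q) = (σ ▷ c) ∘ (d ◁ α) ∘ (Δ_d ▷ q), and (iii) morphisms of 𝔇-𝔠-bicomodules σ̂ : d ∘ q ⟶ d ∘ q′. The correspondence sends σ to σ̂ = (d ◁ σ) ∘ (Δ_d ▷ q) and σ̂ to σ = (ε_d ▷ q′) ∘ σ̂. -/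
open CategoryTheory CategoryTheory.Bicategory CategoryTheory.Limits

universe w v u

variable {𝒷 : Type u} [Bicategory.{w, v} 𝒷]

/-- A comonad in a bicategory `𝒷`, consisting of a 0-cell `a`, a 1-cell `c : a ⟶ a`
and 2-cells `Δ : c ⟶ c ≫ c`, `ε : c ⟶ 𝟙 a` satisfying the coassociativity and
counit axioms (up to the associator and unitors). -/
structure Cmnd (a : 𝒷) where
  c : a ⟶ a
  Δ' : c ⟶ c ≫ c
  ε' : c ⟶ 𝟙 a
  coassoc : Δ' ≫ Δ' ▷ c ≫ (α_ c c c).hom = Δ' ≫ c ◁ Δ'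
  counit_left : Δ' ≫ ε' ▷ c ≫ (λ_ c).hom = 𝟙 c
  counit_right : Δ' ≫ c ◁ ε' ≫ (ρ_ c).hom = 𝟙 c

/-- A right comonad-morphism `(q, α)` from the comonad `D` (over `b`) to the comonad `C`
(over `a`): `α : d ≫ q ⟶ q ≫ c` is compatible with the comultiplications and counits. -/
def IsRightComonadMorphism {a b : 𝒷} (D : Cmnd b) (C : Cmnd a)
    (q : b ⟶ a) (α : D.c ≫ q ⟶ q ≫ C.c) : Prop :=
  (α ≫ q ◁ C.Δ' ≫ (α_ q C.c C.c).inv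
      = D.Δ' ▷ q ≫ (α_ D.c D.c q).hom ≫ D.c ◁ α ≫ (α_ D.c q C.c).inv ≫ α ▷ C.c) ∧
  (α ≫ q ◁ C.ε' ≫ (ρ_ q).hom = D.ε' ▷ q ≫ (λ_ q).hom)

/-- A left comonad-morphism `(p, β)` from the comonad `D` (over `b`) to the comonad `C`
(over `a`): `β : p ≫ d ⟶ c ≫ p` is compatible with the comultiplications and counits. -/
def IsLeftComonadMorphism {a b : 𝒷} (D : Cmnd b) (C : Cmnd a)
    (p : a ⟶ b) (β : p ≫ D.c ⟶ C.c ≫ p) : Prop :=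
  (p ◁ D.Δ' ≫ (α_ p D.c D.c).inv ≫ β ▷ D.c ≫ (α_ C.c p D.c).hom ≫ C.c ◁ β ≫
      (α_ C.c C.c p).inv = β ≫ C.Δ' ▷ p) ∧
  (β ≫ C.ε' ▷ p ≫ (λ_ p).hom = p ◁ D.ε' ≫ (ρ_ p).hom)

/-- `m : b ⟶ a` together with a left `D`-coaction `lam` and a right `C`-coaction `rho`
is a `D`-`C`-bicomodule: both coactions are coassociative and counital and compatible. -/
def IsBicomodule {a b : 𝒷} (D : Cmnd b) (C : Cmnd a) (m : b ⟶ a)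
    (lam : m ⟶ D.c ≫ m) (rho : m ⟶ m ≫ C.c) : Prop :=
  (lam ≫ D.Δ' ▷ m ≫ (α_ D.c D.c m).hom = lam ≫ D.c ◁ lam) ∧
  (lam ≫ D.ε' ▷ m ≫ (λ_ m).hom = 𝟙 m) ∧
  (rho ≫ m ◁ C.Δ' ≫ (α_ m C.c C.c).inv = rho ≫ rho ▷ C.c) ∧
  (rho ≫ m ◁ C.ε' ≫ (ρ_ m).hom = 𝟙 m) ∧
  (rho ≫ lam ▷ C.c ≫ (α_ D.c m C.c).hom = lam ≫ D.c ◁ rho)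

variable {a b : 𝒷} (D : Cmnd b) (C : Cmnd a)

/-- Condition (i) of the Lemma: a 2-cell `σ : d ≫ q ⟶ q'` such that
`α' ∘ (d ◁ σ) ∘ (Δ_d ▷ q) = (σ ▷ c) ∘ (d ◁ α) ∘ (Δ_d ▷ q)`. -/
def SigmaCond (q q' : b ⟶ a) (α : D.c ≫ q ⟶ q ≫ C.c) (α' : D.c ≫ q' ⟶ q' ≫ C.c)
    (σ : D.c ≫ q ⟶ q') : Prop :=
  D.Δ' ▷ q ≫ (α_ D.c D.c q).hom ≫ D.c ◁ σ ≫ α'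
    = D.Δ' ▷ q ≫ (α_ D.c D.c q).hom ≫ D.c ◁ α ≫ (α_ D.c q C.c).inv ≫ σ ▷ C.c

/-- A morphism of `D`-`C`-bicomodules `d ≫ q ⟶ d ≫ q'`, where both carry the bicomodule
structures induced by the right comonad-morphisms `(q, α)` and `(q', α')`. -/
def IsBicomoduleMor (q q' : b ⟶ a) (α : D.c ≫ q ⟶ q ≫ C.c) (α' : D.c ≫ q' ⟶ q' ≫ C.c)
    (φ : D.c ≫ q ⟶ D.c ≫ q') : Prop :=
  (φ ≫ (D.Δ' ▷ q' ≫ (α_ D.c D.c q').hom)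
      = (D.Δ' ▷ q ≫ (α_ D.c D.c q).hom) ≫ D.c ◁ φ) ∧
  (φ ≫ (D.Δ' ▷ q' ≫ (α_ D.c D.c q').hom ≫ D.c ◁ α' ≫ (α_ D.c q' C.c).inv)
      = (D.Δ' ▷ q ≫ (α_ D.c D.c q).hom ≫ D.c ◁ α ≫ (α_ D.c q C.c).inv) ≫ φ ▷ C.c)

/-- Given two right comonad-morphisms `(q, α)` and `(q', α')` from `D` to `C`, the maps
`σ ↦ σ̂ = (d ◁ σ) ∘ (Δ_d ▷ q)` and `σ̂ ↦ (ε_d ▷ q') ∘ σ̂` are mutually inverse bijections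
between the 2-cells `σ : d ≫ q ⟶ q'` satisfying condition (i) and the morphisms of
`D`-`C`-bicomodules `d ≫ q ⟶ d ≫ q'`. -/
theorem sigma_bijection (q q' : b ⟶ a)
    (α : D.c ≫ q ⟶ q ≫ C.c) (α' : D.c ≫ q' ⟶ q' ≫ C.c)
    (hα : IsRightComonadMorphism D C q α) (hα' : IsRightComonadMorphism D C q' α') :
    (∀ σ : D.c ≫ q ⟶ q', SigmaCond D C q q' α α' σ →
      IsBicomoduleMor D C q q' α α' (D.Δ' ▷ q ≫ (α_ D.c D.c q).hom ≫ D.c ◁ σ)) ∧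
    (∀ φ : D.c ≫ q ⟶ D.c ≫ q', IsBicomoduleMor D C q q' α α' φ →
      SigmaCond D C q q' α α' (φ ≫ D.ε' ▷ q' ≫ (λ_ q').hom)) ∧
    (∀ σ : D.c ≫ q ⟶ q', SigmaCond D C q q' α α' σ →
      (D.Δ' ▷ q ≫ (α_ D.c D.c q).hom ≫ D.c ◁ σ) ≫ D.ε' ▷ q' ≫ (λ_ q').hom = σ) ∧
    (∀ φ : D.c ≫ q ⟶ D.c ≫ q', IsBicomoduleMor D C q q' α α' φ →
      D.Δ' ▷ q ≫ (α_ D.c D.c q).hom ≫ D.c ◁ (φ ≫ D.ε' ▷ q' ≫ (λ_ q').hom) = φ) := by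
  obtain ⟨d, Δ', ε', coassoc, hcl, hcr⟩ := D
  refine ⟨?_, ?_, ?_, ?_⟩
  · -- (1) σ satisfying SigmaCond gives a bicomodule morphism
    intro σ hσ
    dsimp only [SigmaCond] at hσ
    constructor
    · calc (Δ' ▷ q ≫ (α_ d d q).hom ≫ d ◁ σ) ≫ (Δ' ▷ q' ≫ (α_ d d q').hom)
          = Δ' ▷ q ≫ (α_ d d q).hom ≫ (d ◁ σ ≫ Δ' ▷ q') ≫ (α_ d d q').hom := by
            simp only [Category.assoc]
        _ = Δ' ▷ q ≫ (α_ d d q).hom ≫ (Δ' ▷ (d ≫ q) ≫ (d ≫ d) ◁ σ) ≫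
              (α_ d d q').hom := by rw [whisker_exchange]
        _ = (Δ' ≫ Δ' ▷ d ≫ (α_ d d d).hom) ▷ q ≫ (α_ d (d ≫ d) q).hom ≫
              d ◁ (α_ d d q).hom ≫ d ◁ (d ◁ σ) := by bicategory
        _ = (Δ' ≫ d ◁ Δ') ▷ q ≫ (α_ d (d ≫ d) q).hom ≫
              d ◁ (α_ d d q).hom ≫ d ◁ (d ◁ σ) := by rw [coassoc]
        _ = (Δ' ▷ q ≫ (α_ d d q).hom) ≫ d ◁ (Δ' ▷ q ≫ (α_ d d q).hom ≫ d ◁ σ) := by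
            bicategory
    · calc (Δ' ▷ q ≫ (α_ d d q).hom ≫ d ◁ σ) ≫
            (Δ' ▷ q' ≫ (α_ d d q').hom ≫ d ◁ α' ≫ (α_ d q' C.c).inv)
          = Δ' ▷ q ≫ (α_ d d q).hom ≫ (d ◁ σ ≫ Δ' ▷ q') ≫ (α_ d d q').hom ≫
              d ◁ α' ≫ (α_ d q' C.c).inv := by simp only [Category.assoc]
        _ = Δ' ▷ q ≫ (α_ d d q).hom ≫ (Δ' ▷ (d ≫ q) ≫ (d ≫ d) ◁ σ) ≫
              (α_ d d q').hom ≫ d ◁ α' ≫ (α_ d q' C.c).inv := by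
            rw [whisker_exchange]
        _ = (Δ' ≫ Δ' ▷ d ≫ (α_ d d d).hom) ▷ q ≫ (α_ d (d ≫ d) q).hom ≫
              d ◁ ((α_ d d q).hom ≫ d ◁ σ ≫ α') ≫ (α_ d q' C.c).inv := by
            bicategory
        _ = (Δ' ≫ d ◁ Δ') ▷ q ≫ (α_ d (d ≫ d) q).hom ≫
              d ◁ ((α_ d d q).hom ≫ d ◁ σ ≫ α') ≫ (α_ d q' C.c).inv := by
            rw [coassoc]
        _ = Δ' ▷ q ≫ (α_ d d q).hom ≫
              d ◁ (Δ' ▷ q ≫ (α_ d d q).hom ≫ d ◁ σ ≫ α') ≫ (α_ d q' C.c).inv := by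
            bicategory
        _ = Δ' ▷ q ≫ (α_ d d q).hom ≫
              d ◁ (Δ' ▷ q ≫ (α_ d d q).hom ≫ d ◁ α ≫ (α_ d q C.c).inv ≫ σ ▷ C.c) ≫
              (α_ d q' C.c).inv := by rw [hσ]
        _ = (Δ' ≫ d ◁ Δ') ▷ q ≫ (α_ d (d ≫ d) q).hom ≫
              d ◁ ((α_ d d q).hom ≫ d ◁ α ≫ (α_ d q C.c).inv ≫ σ ▷ C.c) ≫
              (α_ d q' C.c).inv := by bicategory
        _ = (Δ' ≫ Δ' ▷ d ≫ (α_ d d d).hom) ▷ q ≫ (α_ d (d ≫ d) q).hom ≫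
              d ◁ ((α_ d d q).hom ≫ d ◁ α ≫ (α_ d q C.c).inv ≫ σ ▷ C.c) ≫
              (α_ d q' C.c).inv := by rw [coassoc]
        _ = Δ' ▷ q ≫ (α_ d d q).hom ≫ (Δ' ▷ (d ≫ q) ≫ (d ≫ d) ◁ α) ≫
              (α_ (d ≫ d) q C.c).inv ≫ ((α_ d d q).hom ≫ d ◁ σ) ▷ C.c := by
            bicategory
        _ = Δ' ▷ q ≫ (α_ d d q).hom ≫ (d ◁ α ≫ Δ' ▷ (q ≫ C.c)) ≫
              (α_ (d ≫ d) q C.c).inv ≫ ((α_ d d q).hom ≫ d ◁ σ) ▷ C.c := by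
            rw [whisker_exchange]
        _ = (Δ' ▷ q ≫ (α_ d d q).hom ≫ d ◁ α ≫ (α_ d q C.c).inv) ≫
            (Δ' ▷ q ≫ (α_ d d q).hom ≫ d ◁ σ) ▷ C.c := by bicategory
  · -- (2) a bicomodule morphism gives a σ satisfying SigmaCond
    intro φ hφ
    obtain ⟨h1, h2⟩ := hφ
    dsimp only [SigmaCond]
    have h1' := reassoc_of% h1
    have h2' := reassoc_of% h2
    have hL : Δ' ▷ q ≫ (α_ d d q).hom ≫ d ◁ (φ ≫ ε' ▷ q' ≫ (λ_ q').hom) ≫ α'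
        = φ ≫ α' := by
      calc Δ' ▷ q ≫ (α_ d d q).hom ≫ d ◁ (φ ≫ ε' ▷ q' ≫ (λ_ q').hom) ≫ α'
          = Δ' ▷ q ≫ (α_ d d q).hom ≫ d ◁ φ ≫
              d ◁ (ε' ▷ q') ≫ d ◁ (λ_ q').hom ≫ α' := by
            simp only [Bicategory.whiskerLeft_comp, Category.assoc]
        _ = φ ≫ Δ' ▷ q' ≫ (α_ d d q').hom ≫ d ◁ (ε' ▷ q') ≫
              d ◁ (λ_ q').hom ≫ α' := by rw [← h1']
        _ = φ ≫ (Δ' ≫ d ◁ ε' ≫ (ρ_ d).hom) ▷ q' ≫ α' := by bicategory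
        _ = φ ≫ α' := by rw [hcr]; simp
    have hR : Δ' ▷ q ≫ (α_ d d q).hom ≫ d ◁ α ≫ (α_ d q C.c).inv ≫
          (φ ≫ ε' ▷ q' ≫ (λ_ q').hom) ▷ C.c = φ ≫ α' := by
      calc Δ' ▷ q ≫ (α_ d d q).hom ≫ d ◁ α ≫ (α_ d q C.c).inv ≫
            (φ ≫ ε' ▷ q' ≫ (λ_ q').hom) ▷ C.c
          = Δ' ▷ q ≫ (α_ d d q).hom ≫ d ◁ α ≫ (α_ d q C.c).inv ≫ φ ▷ C.c ≫
              (ε' ▷ q') ▷ C.c ≫ (λ_ q').hom ▷ C.c := by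
            simp only [comp_whiskerRight, Category.assoc]
        _ = φ ≫ Δ' ▷ q' ≫ (α_ d d q').hom ≫ d ◁ α' ≫ (α_ d q' C.c).inv ≫
              (ε' ▷ q') ▷ C.c ≫ (λ_ q').hom ▷ C.c := by rw [← h2']
        _ = φ ≫ Δ' ▷ q' ≫ (α_ d d q').hom ≫ (d ◁ α' ≫ ε' ▷ (q' ≫ C.c)) ≫
              (λ_ (q' ≫ C.c)).hom := by bicategory
        _ = φ ≫ Δ' ▷ q' ≫ (α_ d d q').hom ≫ (ε' ▷ (d ≫ q') ≫ 𝟙 b ◁ α') ≫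
              (λ_ (q' ≫ C.c)).hom := by rw [whisker_exchange]
        _ = φ ≫ (Δ' ≫ ε' ▷ d ≫ (λ_ d).hom) ▷ q' ≫ α' := by bicategory
        _ = φ ≫ α' := by rw [hcl]; simp
    rw [hL, hR]
  · -- (3) σ ↦ σ̂ ↦ σ is the identity
    intro σ _
    dsimp only
    simp only [Category.assoc]
    rw [whisker_exchange_assoc, leftUnitor_naturality]
    have h := congrArg (· ▷ q) hcl
    simp only [comp_whiskerRight, id_whiskerRight] at h
    calc Δ' ▷ q ≫ (α_ d d q).hom ≫ ε' ▷ (d ≫ q) ≫ (λ_ (d ≫ q)).hom ≫ σ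
        = (Δ' ▷ q ≫ (ε' ▷ d) ▷ q ≫ (λ_ d).hom ▷ q) ≫ σ := by bicategory
      _ = σ := by rw [h]; simp
  · -- (4) φ ↦ σ ↦ φ̂ is the identity
    intro φ hφ
    obtain ⟨h1, -⟩ := hφ
    dsimp only at h1 ⊢
    have h1' := reassoc_of% h1
    calc Δ' ▷ q ≫ (α_ d d q).hom ≫ d ◁ (φ ≫ ε' ▷ q' ≫ (λ_ q').hom)
        = Δ' ▷ q ≫ (α_ d d q).hom ≫ d ◁ φ ≫
            d ◁ (ε' ▷ q') ≫ d ◁ (λ_ q').hom := by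
          simp only [Bicategory.whiskerLeft_comp]
      _ = φ ≫ Δ' ▷ q' ≫ (α_ d d q').hom ≫ d ◁ (ε' ▷ q') ≫ d ◁ (λ_ q').hom := by
          rw [← h1']
      _ = φ ≫ (Δ' ≫ d ◁ ε' ≫ (ρ_ d).hom) ▷ q' := by bicategory
      _ = φ := by rw [hcr]; simp
end

section
/- Let 𝔠 = (A, c, Δ_c, ε_c) be a comonad in a 2-category, (m, ρ^m) a right 𝔠-comodule of Ω-type and (n, λ^n) a left 𝔠-comodule of B-type, and suppose the cotensor product m □^c n (the equalizer of ρ^m ▷ n and m ◁ λ^n) exists in Hom(Ω, B). If ρ^m : m ⟶ m ∘ c has a left inverse in the category of right 𝔠-comodules (or λ^n : n ⟶ c ∘ n has a left inverse in the category of left 𝔠-comodules), then the defining equalizer of m □^c n is a contractible (split) equalizer; consequently, for every 1-cell p : B ⟶ Ω′ the canonical map (m □^c n) ∘ p ⟶ m □^c (n ∘ p) is an isomorphism. -/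
open CategoryTheory CategoryTheory.Bicategory CategoryTheory.Limits

universe w v u

variable {𝒷 : Type u} [Bicategory.{w, v} 𝒷]

/-- Key computation in the `ρbar` case. -/
theorem cotensor_aux_right {a b Ω : 𝒷} (c : a ⟶ a) (Δ' : c ⟶ c ≫ c)
    (m : Ω ⟶ a) (ρm : m ⟶ m ≫ c) (ρbar : m ≫ c ⟶ m)
    (hb2 : ρbar ≫ ρm = (m ◁ Δ' ≫ (α_ m c c).inv) ≫ ρbar ▷ c)
    (n : a ⟶ b) (lamn : n ⟶ c ≫ n)
    (hnco : lamn ≫ Δ' ▷ n ≫ (α_ c c n).hom = lamn ≫ c ◁ lamn) :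
    (m ◁ lamn ≫ (α_ m c n).inv ≫ ρbar ▷ n) ≫ ρm ▷ n
      = (m ◁ lamn ≫ (α_ m c n).inv ≫ ρbar ▷ n) ≫ (m ◁ lamn ≫ (α_ m c n).inv) := by
  have hnco' : lamn ≫ Δ' ▷ n = (lamn ≫ c ◁ lamn) ≫ (α_ c c n).inv := by
    rw [← hnco]; simp
  calc (m ◁ lamn ≫ (α_ m c n).inv ≫ ρbar ▷ n) ≫ ρm ▷ n
      = m ◁ lamn ≫ (α_ m c n).inv ≫ (ρbar ≫ ρm) ▷ n := by
        simp [Bicategory.comp_whiskerRight]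
    _ = m ◁ lamn ≫ (α_ m c n).inv ≫ ((m ◁ Δ' ≫ (α_ m c c).inv) ≫ ρbar ▷ c) ▷ n := by
        rw [hb2]
    _ = m ◁ (lamn ≫ Δ' ▷ n) ≫ (α_ m (c ≫ c) n).inv ≫ (α_ m c c).inv ▷ n ≫ (ρbar ▷ c) ▷ n := by
        bicategory
    _ = m ◁ ((lamn ≫ c ◁ lamn) ≫ (α_ c c n).inv) ≫ (α_ m (c ≫ c) n).inv ≫
          (α_ m c c).inv ▷ n ≫ (ρbar ▷ c) ▷ n := by
        rw [hnco']
    _ = m ◁ lamn ≫ (α_ m c n).inv ≫ ((m ≫ c) ◁ lamn ≫ ρbar ▷ (c ≫ n)) ≫ (α_ m c n).inv := by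
        bicategory
    _ = m ◁ lamn ≫ (α_ m c n).inv ≫ (ρbar ▷ n ≫ m ◁ lamn) ≫ (α_ m c n).inv := by
        rw [whisker_exchange]
    _ = (m ◁ lamn ≫ (α_ m c n).inv ≫ ρbar ▷ n) ≫ (m ◁ lamn ≫ (α_ m c n).inv) := by
        simp

/-- Key computation in the `lambar` case. -/
theorem cotensor_aux_left {a b Ω : 𝒷} (c : a ⟶ a) (Δ' : c ⟶ c ≫ c)
    (m : Ω ⟶ a) (ρm : m ⟶ m ≫ c)
    (hmco : ρm ≫ ρm ▷ c = ρm ≫ (m ◁ Δ' ≫ (α_ m c c).inv))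
    (n : a ⟶ b) (lamn : n ⟶ c ≫ n) (lambar : c ≫ n ⟶ n)
    (hb2 : lambar ≫ lamn = (Δ' ▷ n ≫ (α_ c c n).hom) ≫ c ◁ lambar) :
    (ρm ▷ n ≫ (α_ m c n).hom ≫ m ◁ lambar) ≫ ρm ▷ n
      = (ρm ▷ n ≫ (α_ m c n).hom ≫ m ◁ lambar) ≫ (m ◁ lamn ≫ (α_ m c n).inv) := by
  calc (ρm ▷ n ≫ (α_ m c n).hom ≫ m ◁ lambar) ≫ ρm ▷ n
      = ρm ▷ n ≫ (α_ m c n).hom ≫ m ◁ lambar ≫ ρm ▷ n := by simp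
    _ = ρm ▷ n ≫ (α_ m c n).hom ≫ ρm ▷ (c ≫ n) ≫ (m ≫ c) ◁ lambar := by
        rw [whisker_exchange]
    _ = (ρm ≫ ρm ▷ c) ▷ n ≫ (α_ (m ≫ c) c n).hom ≫ (m ≫ c) ◁ lambar := by
        bicategory
    _ = (ρm ≫ m ◁ Δ' ≫ (α_ m c c).inv) ▷ n ≫ (α_ (m ≫ c) c n).hom ≫ (m ≫ c) ◁ lambar := by
        rw [hmco]
    _ = ρm ▷ n ≫ (α_ m c n).hom ≫ m ◁ ((Δ' ▷ n ≫ (α_ c c n).hom) ≫ c ◁ lambar) ≫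
          (α_ m c n).inv := by
        bicategory
    _ = ρm ▷ n ≫ (α_ m c n).hom ≫ m ◁ (lambar ≫ lamn) ≫ (α_ m c n).inv := by
        rw [← hb2]
    _ = (ρm ▷ n ≫ (α_ m c n).hom ≫ m ◁ lambar) ≫ (m ◁ lamn ≫ (α_ m c n).inv) := by
        simp

/-- From splitting data, a split equalizer yields the conclusions. -/
theorem cotensor_aux_split {o o' : 𝒷} {X Y e : o ⟶ o'} (f g : X ⟶ Y)
    (ι : e ⟶ X) (w : ι ≫ f = ι ≫ g) (hlim : IsLimit (Fork.ofι ι w))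
    (t : Y ⟶ X)
    (ht : (f ≫ t = 𝟙 X ∧ (g ≫ t) ≫ f = (g ≫ t) ≫ g) ∨
          (g ≫ t = 𝟙 X ∧ (f ≫ t) ≫ f = (f ≫ t) ≫ g)) :
    (∃ u : X ⟶ e, ι ≫ u = 𝟙 e ∧
      ((f ≫ t = 𝟙 X ∧ g ≫ t = u ≫ ι) ∨ (g ≫ t = 𝟙 X ∧ f ≫ t = u ≫ ι))) ∧
    (∀ {o'' : 𝒷} (p : o' ⟶ o'')
      (w' : ι ▷ p ≫ f ▷ p = ι ▷ p ≫ g ▷ p),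
      Nonempty (IsLimit (Fork.ofι (ι ▷ p) w'))) := by
  have hs : ∃ s : X ⟶ X, s ≫ f = s ≫ g ∧ ι ≫ s = ι ∧
      ((f ≫ t = 𝟙 X ∧ g ≫ t = s) ∨ (g ≫ t = 𝟙 X ∧ f ≫ t = s)) := by
    rcases ht with ⟨h1, h2⟩ | ⟨h1, h2⟩
    · exact ⟨g ≫ t, h2, by rw [← Category.assoc, ← w, Category.assoc, h1, Category.comp_id],
        Or.inl ⟨h1, rfl⟩⟩
    · exact ⟨f ≫ t, h2, by rw [← Category.assoc, w, Category.assoc, h1, Category.comp_id],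
        Or.inr ⟨h1, rfl⟩⟩
  obtain ⟨s, hsfg, hιs, hcase⟩ := hs
  obtain ⟨u, hu⟩ := Fork.IsLimit.lift' hlim s hsfg
  have huι : u ≫ ι = s := hu
  have hιu : ι ≫ u = 𝟙 e := by
    apply Fork.IsLimit.hom_ext hlim
    simpa [huι] using hιs
  refine ⟨⟨u, hιu, ?_⟩, ?_⟩
  · rcases hcase with ⟨h1, h2⟩ | ⟨h1, h2⟩
    · exact Or.inl ⟨h1, by rw [h2, huι]⟩
    · exact Or.inr ⟨h1, by rw [h2, huι]⟩
  · intro o'' p w'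
    constructor
    refine Fork.IsLimit.mk _ (fun sk => sk.ι ≫ u ▷ p) ?_ ?_
    · intro sk
      have hw : sk.ι ≫ f ▷ p = sk.ι ≫ g ▷ p := sk.condition
      have hfact : u ▷ p ≫ ι ▷ p = s ▷ p := by
        rw [← Bicategory.comp_whiskerRight, huι]
      rcases hcase with ⟨h1, h2⟩ | ⟨h1, h2⟩
      · calc (sk.ι ≫ u ▷ p) ≫ ι ▷ p = sk.ι ≫ s ▷ p := by rw [Category.assoc, hfact]
          _ = sk.ι ≫ g ▷ p ≫ t ▷ p := by
              rw [← Bicategory.comp_whiskerRight, h2]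
          _ = sk.ι ≫ f ▷ p ≫ t ▷ p := by
              rw [← Category.assoc, ← hw, Category.assoc]
          _ = sk.ι := by
              rw [← Bicategory.comp_whiskerRight, h1]; simp
      · calc (sk.ι ≫ u ▷ p) ≫ ι ▷ p = sk.ι ≫ s ▷ p := by rw [Category.assoc, hfact]
          _ = sk.ι ≫ f ▷ p ≫ t ▷ p := by
              rw [← Bicategory.comp_whiskerRight, h2]
          _ = sk.ι ≫ g ▷ p ≫ t ▷ p := by
              rw [← Category.assoc, hw, Category.assoc]
          _ = sk.ι := by
              rw [← Bicategory.comp_whiskerRight, h1]; simp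
    · intro sk k hk
      have hk' : k ≫ ι ▷ p = sk.ι := hk
      have : k ≫ ι ▷ p ≫ u ▷ p = k := by
        rw [← Bicategory.comp_whiskerRight, hιu]; simp
      dsimp
      rw [← hk', Category.assoc, this]

/-- Let `C = (a, c, Δ, ε)` be a comonad, `(m, ρm)` a right `C`-comodule of `Ω`-type and
`(n, lamn)` a left `C`-comodule of `b`-type, and suppose `(e, ι)` is the equalizer of
the pair `(ρm ▷ n, m ◁ lamn)` defining the cotensor product `m □^c n` in `Hom(Ω, b)`.
If `ρm` has a left inverse in the category of right `C`-comodules, or `lamn` has a left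
inverse in the category of left `C`-comodules, then this equalizer is contractible
(split), and consequently for every 1-cell `p : b ⟶ Ω'` the whiskered fork is again
an equalizer, i.e. the canonical map `(m □^c n) ≫ p ⟶ m □^c (n ≫ p)` is an
isomorphism. -/
theorem cotensor_split_of_coaction_split_inverse {a b : 𝒷} (Ω : 𝒷) (C : Cmnd a)
    (m : Ω ⟶ a) (ρm : m ⟶ m ≫ C.c)
    (hmco : ρm ≫ ρm ▷ C.c = ρm ≫ (m ◁ C.Δ' ≫ (α_ m C.c C.c).inv))
    (hmcu : ρm ≫ m ◁ C.ε' ≫ (ρ_ m).hom = 𝟙 m)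
    (n : a ⟶ b) (lamn : n ⟶ C.c ≫ n)
    (hnco : lamn ≫ C.Δ' ▷ n ≫ (α_ C.c C.c n).hom = lamn ≫ C.c ◁ lamn)
    (hncu : lamn ≫ C.ε' ▷ n ≫ (λ_ n).hom = 𝟙 n)
    (hsplit :
      (∃ ρbar : m ≫ C.c ⟶ m, ρm ≫ ρbar = 𝟙 m ∧
        ρbar ≫ ρm = (m ◁ C.Δ' ≫ (α_ m C.c C.c).inv) ≫ ρbar ▷ C.c) ∨
      (∃ lambar : C.c ≫ n ⟶ n, lamn ≫ lambar = 𝟙 n ∧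
        lambar ≫ lamn = (C.Δ' ▷ n ≫ (α_ C.c C.c n).hom) ≫ C.c ◁ lambar))
    (e : Ω ⟶ b) (ι : e ⟶ m ≫ n)
    (w : ι ≫ ρm ▷ n = ι ≫ (m ◁ lamn ≫ (α_ m C.c n).inv))
    (hlim : IsLimit (Fork.ofι ι w)) :
    (∃ (u : m ≫ n ⟶ e) (t : (m ≫ C.c) ≫ n ⟶ m ≫ n),
      ι ≫ u = 𝟙 e ∧
      ((ρm ▷ n ≫ t = 𝟙 (m ≫ n) ∧ (m ◁ lamn ≫ (α_ m C.c n).inv) ≫ t = u ≫ ι) ∨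
        ((m ◁ lamn ≫ (α_ m C.c n).inv) ≫ t = 𝟙 (m ≫ n) ∧ ρm ▷ n ≫ t = u ≫ ι))) ∧
    (∀ {Ω' : 𝒷} (p : b ⟶ Ω')
      (w' : ι ▷ p ≫ (ρm ▷ n) ▷ p = ι ▷ p ≫ (m ◁ lamn ≫ (α_ m C.c n).inv) ▷ p),
      Nonempty (IsLimit (Fork.ofι (ι ▷ p) w'))) := by
  obtain ⟨t, ht⟩ : ∃ t : (m ≫ C.c) ≫ n ⟶ m ≫ n,
      (ρm ▷ n ≫ t = 𝟙 (m ≫ n) ∧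
        (((m ◁ lamn ≫ (α_ m C.c n).inv) ≫ t) ≫ ρm ▷ n
          = ((m ◁ lamn ≫ (α_ m C.c n).inv) ≫ t) ≫ (m ◁ lamn ≫ (α_ m C.c n).inv))) ∨
      ((m ◁ lamn ≫ (α_ m C.c n).inv) ≫ t = 𝟙 (m ≫ n) ∧
        ((ρm ▷ n ≫ t) ≫ ρm ▷ n = (ρm ▷ n ≫ t) ≫ (m ◁ lamn ≫ (α_ m C.c n).inv))) := by
    rcases hsplit with ⟨ρbar, hb1, hb2⟩ | ⟨lambar, hb1, hb2⟩
    · refine ⟨ρbar ▷ n, Or.inl ⟨?_, ?_⟩⟩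
      · rw [← Bicategory.comp_whiskerRight, hb1, Bicategory.id_whiskerRight]
      · have := cotensor_aux_right C.c C.Δ' m ρm ρbar hb2 n lamn hnco
        simpa using this
    · refine ⟨(α_ m C.c n).hom ≫ m ◁ lambar, Or.inr ⟨?_, ?_⟩⟩
      · simp [← Bicategory.whiskerLeft_comp, hb1]
      · have := cotensor_aux_left C.c C.Δ' m ρm hmco n lamn lambar hb2
        simpa using this
  obtain ⟨hu, hw⟩ := cotensor_aux_split (ρm ▷ n) (m ◁ lamn ≫ (α_ m C.c n).inv) ι w hlim t ht
  obtain ⟨u, hιu, hc⟩ := hu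
  refine ⟨⟨u, t, hιu, ?_⟩, hw⟩
  rcases hc with ⟨h1, h2⟩ | ⟨h1, h2⟩
  · exact Or.inl ⟨h1, h2⟩
  · exact Or.inr ⟨h1, h2⟩
end
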